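/- arXiv:math/0608051 — 2 statements merged into one kernel-verified Lean document; each statement's English description precedes it below -/
import Mathlib

section
/- Let d ≥ 1, B ≥ 0, and let φ : ℝ^d → ℝ be Borel measurable with φ(u) ≥ -2B for all u and with u ↦ e^{-φ(u)} - 1 Lebesgue integrable on ℝ^d. Then for every m ≥ 1 and all points x₁, …, x_m ∈ ℝ^d, ∫_{ℝ^d} |exp(-∑_{i=1}^m φ(u - x_i)) - 1| du ≤ (∑_{j=0}^{m-1} e^{2jB}) · ∫_{ℝ^d} |e^{-φ(u)} - 1| du. -/
open MeasureTheory
open scoped BigOperators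

lemma prod_sub_one_abs_bound (C : ℝ) (hC : 1 ≤ C) (a : ℕ → ℝ)
    (ha0 : ∀ i, 0 ≤ a i) (haC : ∀ i, a i ≤ C) (n : ℕ) :
    |(∏ i ∈ Finset.range n, a i) - 1| ≤ ∑ k ∈ Finset.range n, C ^ k * |a k - 1| := by
  induction n with
  | zero => simp
  | succ n ih =>
    rw [Finset.prod_range_succ, Finset.sum_range_succ]
    set P := ∏ i ∈ Finset.range n, a i with hP
    have hP0 : 0 ≤ P := Finset.prod_nonneg fun i _ => ha0 i
    have hPC : P ≤ C ^ n := by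
      calc P ≤ ∏ _i ∈ Finset.range n, C :=
            Finset.prod_le_prod (fun i _ => ha0 i) (fun i _ => haC i)
        _ = C ^ n := by simp
    calc |P * a n - 1| = |P * (a n - 1) + (P - 1)| := by ring_nf
      _ ≤ |P * (a n - 1)| + |P - 1| := abs_add_le _ _
      _ = P * |a n - 1| + |P - 1| := by rw [abs_mul, abs_of_nonneg hP0]
      _ ≤ C ^ n * |a n - 1| + ∑ k ∈ Finset.range n, C ^ k * |a k - 1| :=
            add_le_add (mul_le_mul_of_nonneg_right hPC (abs_nonneg _)) ih
      _ = (∑ k ∈ Finset.range n, C ^ k * |a k - 1|) + C ^ n * |a n - 1| := add_comm _ _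

/-- For a pair potential `φ` bounded below by `-2B` with `e^{-φ} - 1` integrable,
and any points `x₁, …, x_m`, one has
`∫ |exp(-∑ᵢ φ(u - xᵢ)) - 1| du ≤ (∑_{j=0}^{m-1} e^{2jB}) ∫ |e^{-φ(u)} - 1| du`. -/
theorem stmt2 (d : ℕ) (hd : 1 ≤ d) (B : ℝ) (hB : 0 ≤ B)
    (φ : EuclideanSpace ℝ (Fin d) → ℝ) (hmeas : Measurable φ)
    (hlb : ∀ u, -2 * B ≤ φ u)
    (hint : Integrable (fun u => Real.exp (-φ u) - 1))
    (m : ℕ) (hm : 1 ≤ m) (x : Fin m → EuclideanSpace ℝ (Fin d)) :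
    ∫⁻ u, ENNReal.ofReal |Real.exp (-∑ i, φ (u - x i)) - 1| ≤
      ENNReal.ofReal ((∑ j ∈ Finset.range m, Real.exp (2 * j * B)) *
        ∫ u, |Real.exp (-φ u) - 1|) := by
  set C : ℝ := Real.exp (2 * B) with hCdef
  have hC1 : (1 : ℝ) ≤ C := Real.one_le_exp (by linarith)
  have hC0 : (0 : ℝ) ≤ C := le_trans zero_le_one hC1
  set I : ℝ := ∫ u, |Real.exp (-φ u) - 1| with hIdef
  have hI0 : 0 ≤ I := integral_nonneg fun u => abs_nonneg _
  -- extend x to ℕ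
  set y : ℕ → EuclideanSpace ℝ (Fin d) := fun k => if h : k < m then x ⟨k, h⟩ else 0 with hy
  set a : EuclideanSpace ℝ (Fin d) → ℕ → ℝ := fun u k => Real.exp (-φ (u - y k)) with ha
  have ha0 : ∀ u k, 0 ≤ a u k := fun u k => (Real.exp_pos _).le
  have haC : ∀ u k, a u k ≤ C := by
    intro u k
    exact Real.exp_le_exp.2 (by have := hlb (u - y k); linarith)
  -- pointwise identity and bound
  have hptwise : ∀ u, |Real.exp (-∑ i, φ (u - x i)) - 1| ≤
      ∑ k ∈ Finset.range m, C ^ k * |a u k - 1| := by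
    intro u
    have hprod : Real.exp (-∑ i, φ (u - x i)) = ∏ k ∈ Finset.range m, a u k := by
      rw [← Fin.prod_univ_eq_prod_range (fun k => a u k) m]
      rw [← Real.exp_sum]
      congr 1
      rw [← Finset.sum_neg_distrib]
      congr 1
      funext i
      simp [ha, hy, i.isLt]
    rw [hprod]
    exact prod_sub_one_abs_bound C hC1 (a u) (ha0 u) (haC u) m
  -- measurability of the basic function
  have hmeas1 : Measurable fun u : EuclideanSpace ℝ (Fin d) =>
      ENNReal.ofReal |Real.exp (-φ u) - 1| :=
    (ENNReal.measurable_ofReal.comp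
      (((Real.measurable_exp.comp hmeas.neg).sub measurable_const).abs))
  have hmeask : ∀ k, Measurable fun u : EuclideanSpace ℝ (Fin d) =>
      ENNReal.ofReal |a u k - 1| := by
    intro k
    exact hmeas1.comp (measurable_id.sub_const (y k))
  -- value of each translated integral
  have hI' : ENNReal.ofReal I = ∫⁻ u, ENNReal.ofReal |Real.exp (-φ u) - 1| := by
    rw [hIdef]
    exact ofReal_integral_eq_lintegral_ofReal hint.abs
      (Filter.Eventually.of_forall fun u => abs_nonneg _)
  have htrans : ∀ k, ∫⁻ u, ENNReal.ofReal |a u k - 1| = ENNReal.ofReal I := by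
    intro k
    rw [hI']
    exact lintegral_sub_right_eq_self
      (fun u => ENNReal.ofReal |Real.exp (-φ u) - 1|) (y k)
  calc ∫⁻ u, ENNReal.ofReal |Real.exp (-∑ i, φ (u - x i)) - 1|
      ≤ ∫⁻ u, ENNReal.ofReal (∑ k ∈ Finset.range m, C ^ k * |a u k - 1|) :=
        lintegral_mono fun u => ENNReal.ofReal_le_ofReal (hptwise u)
    _ = ∫⁻ u, ∑ k ∈ Finset.range m, ENNReal.ofReal (C ^ k) * ENNReal.ofReal |a u k - 1| := by
        congr 1
        funext u
        rw [ENNReal.ofReal_sum_of_nonneg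
          (fun k _ => mul_nonneg (pow_nonneg hC0 k) (abs_nonneg _))]
        exact Finset.sum_congr rfl fun k _ => ENNReal.ofReal_mul (pow_nonneg hC0 k)
    _ = ∑ k ∈ Finset.range m, ENNReal.ofReal (C ^ k) * ∫⁻ u, ENNReal.ofReal |a u k - 1| := by
        rw [lintegral_finset_sum _ (fun k _ => (hmeask k).const_mul _)]
        exact Finset.sum_congr rfl fun k _ => lintegral_const_mul _ (hmeask k)
    _ = ∑ k ∈ Finset.range m, ENNReal.ofReal (C ^ k) * ENNReal.ofReal I := by
        exact Finset.sum_congr rfl fun k _ => by rw [htrans k]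
    _ = ENNReal.ofReal ((∑ j ∈ Finset.range m, Real.exp (2 * j * B)) * I) := by
        rw [Finset.sum_mul, ENNReal.ofReal_sum_of_nonneg
          (fun j _ => mul_nonneg (Real.exp_pos _).le hI0)]
        refine Finset.sum_congr rfl fun k _ => ?_
        rw [← ENNReal.ofReal_mul (pow_nonneg hC0 k)]
        congr 2
        rw [hCdef, ← Real.exp_nat_mul]
        ring_nf
end

section
/- Let d ≥ 1 and let φ : ℝ^d → ℝ be Borel measurable such that u ↦ e^{-φ(u)} - 1 is Lebesgue integrable on ℝ^d. Then for every δ > 0 and every R > 0, the Lebesgue measure of the set {u ∈ ℝ^d : ‖u‖ ≤ R and |φ(u + z)| ≥ δ} tends to 0 as ‖z‖ → ∞. -/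
open MeasureTheory Filter

/-- If `e^{-φ} - 1` is Lebesgue integrable on `ℝ^d`, then for every `δ > 0` and `R > 0`
the Lebesgue measure of `{u : ‖u‖ ≤ R, |φ(u + z)| ≥ δ}` tends to `0` as `‖z‖ → ∞`,
i.e. along the filter of complements of bounded sets. -/
theorem stmt5 (d : ℕ) (hd : 1 ≤ d)
    (φ : EuclideanSpace ℝ (Fin d) → ℝ) (hmeas : Measurable φ)
    (hint : Integrable (fun u => Real.exp (-φ u) - 1))
    (δ R : ℝ) (hδ : 0 < δ) (hR : 0 < R) :
    Tendsto (fun z : EuclideanSpace ℝ (Fin d) =>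
        volume {u : EuclideanSpace ℝ (Fin d) | ‖u‖ ≤ R ∧ δ ≤ |φ (u + z)|})
      (Bornology.cobounded (EuclideanSpace ℝ (Fin d))) (nhds 0) := by
  have _hE : True := trivial
  set g : (EuclideanSpace ℝ (Fin d)) → ℝ := fun u => Real.exp (-φ u) - 1 with hg_def
  have hg : Measurable g := (Real.measurable_exp.comp hmeas.neg).sub measurable_const
  set ε₀ : ℝ := 1 - Real.exp (-δ) with hε₀_def
  have hε₀ : 0 < ε₀ := by
    have : Real.exp (-δ) < 1 := Real.exp_lt_one_iff.2 (by linarith)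
    linarith
  -- pointwise bound: |φ v| ≥ δ implies |g v| ≥ ε₀
  have key : ∀ v : (EuclideanSpace ℝ (Fin d)), δ ≤ |φ v| → ε₀ ≤ |g v| := by
    intro v hv
    rcases abs_le.1 (le_refl |φ v|) with ⟨h1, h2⟩
    rcases le_abs.1 hv with h | h
    · -- φ v ≥ δ, so exp(-φ v) ≤ exp(-δ) < 1
      have h3 : Real.exp (-φ v) ≤ Real.exp (-δ) := Real.exp_le_exp.2 (by linarith)
      have h4 : g v ≤ Real.exp (-δ) - 1 := by simp only [hg_def]; linarith
      have h5 : 0 < Real.exp (-φ v) := Real.exp_pos _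
      rw [abs_of_nonpos (by simp only [hg_def]; nlinarith [Real.exp_lt_one_iff.2 (show -δ < 0 by linarith)])]
      simp only [hg_def]; linarith
    · -- φ v ≤ -δ, so exp(-φ v) ≥ exp δ ≥ 1 + δ
      have h3 : Real.exp δ ≤ Real.exp (-φ v) := Real.exp_le_exp.2 (by linarith)
      have h4 : δ + 1 ≤ Real.exp δ := Real.add_one_le_exp δ
      have h5 : Real.exp (-δ) > 0 := Real.exp_pos _
      have h6 : -δ + 1 ≤ Real.exp (-δ) := Real.add_one_le_exp (-δ)
      have : ε₀ ≤ g v := by simp only [hg_def, hε₀_def]; linarith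
      exact this.trans (le_abs_self _)
  set c : ENNReal := ENNReal.ofReal ε₀ with hc_def
  have hc0 : c ≠ 0 := by simp [hc_def, hε₀.le, ENNReal.ofReal_eq_zero, not_le, hε₀]
  set ν : Measure (EuclideanSpace ℝ (Fin d)) := volume.withDensity (fun v => (‖g v‖₊ : ENNReal)) with hν_def
  have hν_apply : ∀ s : Set (EuclideanSpace ℝ (Fin d)), MeasurableSet s → ν s = ∫⁻ v in s, (‖g v‖₊ : ENNReal) := by
    intro s hs; rw [hν_def, withDensity_apply _ hs]
  have hν_fin : ν Set.univ ≠ ⊤ := by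
    rw [hν_apply _ MeasurableSet.univ, Measure.restrict_univ]
    exact hint.2.ne
  -- main bound
  have bound : ∀ z : (EuclideanSpace ℝ (Fin d)), volume {u : (EuclideanSpace ℝ (Fin d)) | ‖u‖ ≤ R ∧ δ ≤ |φ (u + z)|}
      ≤ c⁻¹ * ν (Metric.closedBall z R) := by
    intro z
    have hmp : MeasurePreserving (fun u : (EuclideanSpace ℝ (Fin d)) => u + z) volume volume :=
      measurePreserving_add_right volume z
    have hset : {u : (EuclideanSpace ℝ (Fin d)) | ‖u‖ ≤ R ∧ δ ≤ |φ (u + z)|}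
        = (fun u : (EuclideanSpace ℝ (Fin d)) => u + z) ⁻¹' {v : (EuclideanSpace ℝ (Fin d)) | ‖v - z‖ ≤ R ∧ δ ≤ |φ v|} := by
      ext u; simp [Set.mem_preimage]
    have hms : MeasurableSet {v : (EuclideanSpace ℝ (Fin d)) | ‖v - z‖ ≤ R ∧ δ ≤ |φ v|} := by
      apply MeasurableSet.inter
      · exact measurableSet_le (measurable_id.sub_const z).norm measurable_const
      · exact measurableSet_le measurable_const hmeas.abs
    rw [hset, hmp.measure_preimage hms.nullMeasurableSet]
    -- now bound volume of {v | ‖v - z‖ ≤ R ∧ δ ≤ |φ v|}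
    have hsub : {v : (EuclideanSpace ℝ (Fin d)) | ‖v - z‖ ≤ R ∧ δ ≤ |φ v|}
        ⊆ Metric.closedBall z R ∩ {v : (EuclideanSpace ℝ (Fin d)) | c ≤ (‖g v‖₊ : ENNReal)} := by
      intro v ⟨h1, h2⟩
      refine ⟨by simpa [Metric.mem_closedBall, dist_eq_norm] using h1, ?_⟩
      have := key v h2
      calc c = ENNReal.ofReal ε₀ := rfl
        _ ≤ ENNReal.ofReal |g v| := ENNReal.ofReal_le_ofReal this
        _ = (‖g v‖₊ : ENNReal) := by
            rw [← Real.norm_eq_abs, ofReal_norm, enorm_eq_nnnorm]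
    calc volume {v : (EuclideanSpace ℝ (Fin d)) | ‖v - z‖ ≤ R ∧ δ ≤ |φ v|}
        ≤ volume (Metric.closedBall z R ∩ {v : (EuclideanSpace ℝ (Fin d)) | c ≤ (‖g v‖₊ : ENNReal)}) :=
          measure_mono hsub
      _ = (volume.restrict (Metric.closedBall z R)) {v : (EuclideanSpace ℝ (Fin d)) | c ≤ (‖g v‖₊ : ENNReal)} := by
          rw [Measure.restrict_apply (measurableSet_le measurable_const hg.nnnorm.coe_nnreal_ennreal),
            Set.inter_comm]
      _ ≤ c⁻¹ * ∫⁻ v in Metric.closedBall z R, (‖g v‖₊ : ENNReal) := by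
          rw [← ENNReal.div_eq_inv_mul]
          exact meas_ge_le_lintegral_div hg.nnnorm.coe_nnreal_ennreal.aemeasurable hc0
            ENNReal.ofReal_ne_top
      _ = c⁻¹ * ν (Metric.closedBall z R) := by
          rw [hν_apply _ measurableSet_closedBall]
    -- done per z
  -- the tail of ν tends to 0
  have tail : Tendsto (fun z : (EuclideanSpace ℝ (Fin d)) => ν (Metric.closedBall z R))
      (Bornology.cobounded (EuclideanSpace ℝ (Fin d))) (nhds 0) := by
    rw [ENNReal.tendsto_nhds_zero]
    intro ε hε
    have hIter : Tendsto (fun n : ℕ => ν (Metric.closedBall (0 : (EuclideanSpace ℝ (Fin d))) n)ᶜ) atTop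
        (nhds (ν (⋂ n : ℕ, (Metric.closedBall (0 : (EuclideanSpace ℝ (Fin d))) n)ᶜ))) :=
      tendsto_measure_iInter_atTop
        (fun n => measurableSet_closedBall.compl.nullMeasurableSet)
        (fun n m hnm => Set.compl_subset_compl.2
          (Metric.closedBall_subset_closedBall (by exact_mod_cast hnm)))
        ⟨0, (lt_of_le_of_lt (measure_mono (Set.subset_univ _)) hν_fin.lt_top).ne⟩
    have hempty : (⋂ n : ℕ, (Metric.closedBall (0 : (EuclideanSpace ℝ (Fin d))) n)ᶜ) = ∅ := by
      ext v
      simp only [Set.mem_iInter, Set.mem_compl_iff, Metric.mem_closedBall, not_le,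
        Set.mem_empty_iff_false, iff_false, not_forall, not_lt]
      obtain ⟨n, hn⟩ := exists_nat_ge (dist v 0)
      exact ⟨n, hn⟩
    rw [hempty, measure_empty] at hIter
    obtain ⟨n, hn⟩ := (ENNReal.tendsto_nhds_zero.1 hIter ε hε).exists
    filter_upwards [tendsto_norm_cobounded_atTop.eventually
      (eventually_gt_atTop ((n : ℝ) + R))] with z hz
    refine le_trans (measure_mono ?_) hn
    intro v hv
    simp only [Set.mem_compl_iff, Metric.mem_closedBall, not_le]
    have hvz : dist v z ≤ R := hv
    have htri : dist z 0 ≤ dist z v + dist v 0 := dist_triangle z v 0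
    rw [dist_comm z v] at htri
    simp only [dist_zero_right] at htri ⊢
    linarith
  -- combine
  have hmul : Tendsto (fun z : (EuclideanSpace ℝ (Fin d)) => c⁻¹ * ν (Metric.closedBall z R))
      (Bornology.cobounded (EuclideanSpace ℝ (Fin d))) (nhds 0) := by
    have := ENNReal.Tendsto.const_mul tail (Or.inr (ENNReal.inv_ne_top.2 hc0))
    simpa using this
  exact tendsto_of_tendsto_of_tendsto_of_le_of_le tendsto_const_nhds hmul
    (fun z => zero_le) bound
end
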